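/- For any x ∈ [0,1], p ∈ (0,1], and γ > 0 with coefficient α satisfying 0 < α ≤ 2γ, the conditional moment-generating-function inequality E[exp(α · (x/(p+γ)) · B)] ≤ exp(α x) holds, where B is a Bernoulli(p) random variable; equivalently, p·exp(αx/(p+γ)) + (1-p) ≤ exp(αx). -/

import Mathlib

open Real

lemma aux_one_sub (v : ℝ) : (1 - v) * Real.exp v ≤ 1 := by
  have h1 : 1 - v ≤ Real.exp (-v) := by linarith [Real.add_one_le_exp (-v)]
  calc (1 - v) * Real.exp v ≤ Real.exp (-v) * Real.exp v :=
        mul_le_mul_of_nonneg_right h1 (Real.exp_pos v).le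
    _ = 1 := by rw [← Real.exp_add]; simp

lemma aux_key (u : ℝ) (hu : 0 ≤ u) : (1 - u / 2) * Real.exp u ≤ 1 + u / 2 := by
  set f : ℝ → ℝ := fun v => 1 + v / 2 - (1 - v / 2) * Real.exp v with hf
  have hd : ∀ v : ℝ, HasDerivAt f ((1 - (1 - v) * Real.exp v) / 2) v := by
    intro v
    have h1 : HasDerivAt (fun v : ℝ => 1 - v / 2) (-(1 / 2)) v := by
      simpa using ((hasDerivAt_id v).div_const 2).const_sub 1
    have h2 : HasDerivAt (fun v : ℝ => (1 - v / 2) * Real.exp v)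
        (-(1 / 2) * Real.exp v + (1 - v / 2) * Real.exp v) v :=
      h1.mul (Real.hasDerivAt_exp v)
    have h3 : HasDerivAt (fun v : ℝ => 1 + v / 2) (1 / 2) v := by
      simpa using ((hasDerivAt_id v).div_const 2).const_add 1
    have := h3.sub h2
    exact this.congr_deriv (by ring)
  have hmono : Monotone f := by
    apply monotone_of_deriv_nonneg
    · exact fun v => (hd v).differentiableAt
    · intro v
      rw [(hd v).deriv]
      have := aux_one_sub v
      linarith
  have h0 : f 0 = 0 := by simp [hf]
  have := hmono hu
  rw [h0] at this
  simp only [hf] at this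
  linarith

/-- One-step MGF inequality in the supermartingale argument for IX estimators:
`p·exp(αx/(p+γ)) + (1-p) ≤ exp(αx)`. -/
theorem stmt_4 (x p γ α : ℝ) (hx0 : 0 ≤ x) (hx1 : x ≤ 1)
    (hp0 : 0 < p) (hp1 : p ≤ 1) (hγ : 0 < γ) (hα0 : 0 < α) (hα : α ≤ 2 * γ) :
    p * Real.exp (α * x / (p + γ)) + (1 - p) ≤ Real.exp (α * x) := by
  set s := α * x with hs
  have hs0 : 0 ≤ s := by positivity
  have hs2 : s ≤ 2 * γ := by
    calc s = α * x := hs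
      _ ≤ α * 1 := by nlinarith
      _ ≤ 2 * γ := by linarith
  have hpγ : 0 < p + γ := by linarith
  set u := s / (p + γ) with hu
  have hu0 : 0 ≤ u := by positivity
  have hkey := aux_key u hu0
  set E := Real.exp u with hE
  have hEpos : 0 < E := Real.exp_pos u
  -- clear denominators: (2*(p+γ) - s) * E ≤ 2*(p+γ) + s
  have hu_val : u * (p + γ) = s := by rw [hu]; field_simp
  have hclear : (2 * (p + γ) - s) * E ≤ 2 * (p + γ) + s := by
    have h2 : (1 - u / 2) * E * (2 * (p + γ)) ≤ (1 + u / 2) * (2 * (p + γ)) :=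
      mul_le_mul_of_nonneg_right hkey (by linarith)
    nlinarith [h2, hu_val]
  have hgoal : p * E ≤ p + s := by
    have hpos : 0 < 2 * (p + γ) - s := by linarith
    nlinarith [mul_le_mul_of_nonneg_left hclear hp0.le, hs0, hs2, hEpos]
  have hexp : 1 + s ≤ Real.exp s := by linarith [Real.add_one_le_exp s]
  linarith
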